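/- Let d, n ≥ 1 and let U be a nonempty connected open subset of ℂ^d. Let α be a positive integer, let h₁, …, h_n : U → ℂ be holomorphic, and let (f_j)_{j∈ℕ} be a sequence of holomorphic functions U → ℂ such that for every z ∈ U the family (|f_j(z)|²)_{j∈ℕ} is summable and (1 + Σ_{i=1}^n |h_i(z)|²)^α = 1 + ∑'_{j∈ℕ} |f_j(z)|². Then the ℂ-linear subspace of the space of functions U → ℂ spanned by {f_j : j ∈ ℕ} has dimension at most (n+α choose n); in particular, the infinite family (f_j)_{j∈ℕ} is not linearly independent over ℂ. -/

import Mathlib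

open Filter Metric Complex Set Cardinal
open scoped ComplexConjugate Topology

set_option maxHeartbeats 1000000

noncomputable section

namespace Stmt0Aux


/-- If `F` has a derivative at `conj t`, then `s ↦ conj (F (conj s))` has a derivative at `t`. -/
lemma hasDerivAt_conj_conj {F : ℂ → ℂ} {a t : ℂ}
    (hF : HasDerivAt F a ((starRingEnd ℂ) t)) :
    HasDerivAt (fun s => (starRingEnd ℂ) (F ((starRingEnd ℂ) s))) ((starRingEnd ℂ) a) t := by
  rw [hasDerivAt_iff_tendsto_slope] at hF ⊢
  have hconj : Tendsto (starRingEnd ℂ) (𝓝[≠] t) (𝓝[≠] ((starRingEnd ℂ) t)) := by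
    rw [tendsto_nhdsWithin_iff]
    constructor
    · exact (Complex.continuous_conj.tendsto t).mono_left nhdsWithin_le_nhds
    · filter_upwards [self_mem_nhdsWithin] with s hs
      simp only [Set.mem_compl_iff, Set.mem_singleton_iff] at hs ⊢
      exact fun hc => hs ((starRingEnd ℂ).injective hc)
  have h2 : Tendsto (fun s => (starRingEnd ℂ) (slope F ((starRingEnd ℂ) t) ((starRingEnd ℂ) s)))
      (𝓝[≠] t) (𝓝 ((starRingEnd ℂ) a)) :=
    ((Complex.continuous_conj.tendsto a).comp (hF.comp hconj))
  refine h2.congr fun s => ?_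
  simp only [slope_def_field, map_div₀, map_sub, Complex.conj_conj]

lemma differentiableAt_conj_comp {G : ℂ → ℂ} {t : ℂ}
    (hG : DifferentiableAt ℂ G ((starRingEnd ℂ) t)) :
    DifferentiableAt ℂ (fun s => (starRingEnd ℂ) (G ((starRingEnd ℂ) s))) t :=
  (hasDerivAt_conj_conj hG.hasDerivAt).differentiableAt

/-- Dini-type lemma. -/
lemma dini_aux {E' : Type*} [TopologicalSpace E'] {K : Set E'} (hK : IsCompact K)
    (T : ℕ → E' → ℝ)
    (hTc : ∀ J, ContinuousOn (T J) K)
    (hTm : ∀ J, ∀ x ∈ K, T (J + 1) x ≤ T J x)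
    (hT0 : ∀ x ∈ K, Tendsto (fun J => T J x) atTop (𝓝 0))
    {ε : ℝ} (hε : 0 < ε) :
    ∃ J₀, ∀ J ≥ J₀, ∀ x ∈ K, T J x < ε := by
  classical
  haveI : CompactSpace K := isCompact_iff_compactSpace.mp hK
  have hanti : ∀ x : K, Antitone fun J => T J x :=
    fun x => antitone_nat_of_succ_le fun J => hTm J x x.2
  have hcov : (Set.univ : Set K) ⊆ ⋃ J, {x : K | T J (x : E') < ε} := by
    intro x _
    have := (hT0 x x.2).eventually_lt_const hε
    rcases this.exists with ⟨J, hJ⟩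
    exact Set.mem_iUnion.2 ⟨J, hJ⟩
  obtain ⟨t, ht⟩ := isCompact_univ.elim_finite_subcover
    (fun J => {x : K | T J (x : E') < ε})
    (fun J => isOpen_lt ((hTc J).restrict) continuous_const) hcov
  refine ⟨t.sup id, fun J hJ x hx => ?_⟩
  have hxK : (⟨x, hx⟩ : K) ∈ ⋃ i ∈ t, {x : K | T i (x : E') < ε} := ht (Set.mem_univ _)
  rcases Set.mem_iUnion₂.1 hxK with ⟨i, hit, hxi⟩
  have hiJ : i ≤ J := le_trans (Finset.le_sup (f := id) hit) hJ
  exact lt_of_le_of_lt (hanti ⟨x, hx⟩ hiJ) hxi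

lemma summable_mul_conj {f g : ℕ → ℂ} (hf : Summable fun j => ‖f j‖ ^ 2)
    (hg : Summable fun j => ‖g j‖ ^ 2) :
    Summable fun j => f j * (starRingEnd ℂ) (g j) := by
  apply Summable.of_norm_bounded ((hf.add hg).div_const 2)
  intro j
  rw [norm_mul, RCLike.norm_conj]
  nlinarith [sq_nonneg (‖f j‖ - ‖g j‖), norm_nonneg (f j), norm_nonneg (g j)]

lemma summable_norm_mul_conj {f g : ℕ → ℂ} (hf : Summable fun j => ‖f j‖ ^ 2)
    (hg : Summable fun j => ‖g j‖ ^ 2) :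
    Summable fun j => ‖f j * (starRingEnd ℂ) (g j)‖ := by
  apply Summable.of_nonneg_of_le (fun j => norm_nonneg _) _ ((hf.add hg).div_const 2)
  intro j
  rw [norm_mul, RCLike.norm_conj]
  nlinarith [sq_nonneg (‖f j‖ - ‖g j‖), norm_nonneg (f j), norm_nonneg (g j)]

lemma mul_conj_eq (z : ℂ) : z * (starRingEnd ℂ) z = ((‖z‖ ^ 2 : ℝ) : ℂ) := by
  rw [Complex.mul_conj]
  norm_cast
  rw [Complex.normSq_eq_norm_sq]

lemma analyticOnNhd_finset_prod {d : ℕ} {ι : Type*} {U : Set (Fin d → ℂ)} (s : Finset ι)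
    (F : ι → (Fin d → ℂ) → ℂ) (hF : ∀ i, AnalyticOnNhd ℂ (F i) U) :
    AnalyticOnNhd ℂ (fun y => ∏ i ∈ s, F i y) U := by
  classical
  induction s using Finset.cons_induction with
  | empty => simpa using analyticOnNhd_const
  | cons i s his ih =>
    simp only [Finset.prod_cons]
    exact (hF i).mul ih

lemma analyticOnNhd_finset_sum {d : ℕ} {ι : Type*} {U : Set (Fin d → ℂ)} (s : Finset ι)
    (F : ι → (Fin d → ℂ) → ℂ) (hF : ∀ i, AnalyticOnNhd ℂ (F i) U) :
    AnalyticOnNhd ℂ (fun y => ∑ i ∈ s, F i y) U := by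
  classical
  induction s using Finset.cons_induction with
  | empty => simpa using analyticOnNhd_const
  | cons i s his ih =>
    simp only [Finset.sum_cons]
    exact (hF i).add ih



/-- If every finite linear relation among the tuples `(P k z)_k` kills the corresponding
combination of values of `f`, then `f` is in the span of the `P k`. -/
lemma mem_span_of_relations {Z : Type*} {κ : Type*} [Fintype κ]
    (P : κ → Z → ℂ) (f : Z → ℂ)
    (hker : ∀ μ : Z →₀ ℂ, (∀ k, (μ.sum fun z a => a * P k z) = 0) →
        (μ.sum fun z a => a * f z) = 0) :
    f ∈ Submodule.span ℂ (Set.range P) := by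
  classical
  set Φ : Z → (κ → ℂ) := fun z k => P k z with hΦ
  set T : (Z →₀ ℂ) →ₗ[ℂ] (κ → ℂ) := Finsupp.linearCombination ℂ Φ with hT
  set τ : (Z →₀ ℂ) →ₗ[ℂ] ℂ := Finsupp.linearCombination ℂ f with hτ
  have hker' : LinearMap.ker T ≤ LinearMap.ker τ := by
    intro μ hμ
    simp only [LinearMap.mem_ker] at hμ ⊢
    have hk : ∀ k, (μ.sum fun z a => a * P k z) = 0 := by
      intro k
      have h1 := congrFun (hμ : T μ = 0) k
      rw [hT, Finsupp.linearCombination_apply, Finsupp.sum] at h1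
      rw [Finset.sum_apply] at h1
      simpa [Φ, smul_eq_mul, Finsupp.sum] using h1
    have h2 := hker μ hk
    rw [hτ, Finsupp.linearCombination_apply]
    simpa [smul_eq_mul] using h2
  obtain ⟨q, hq⟩ := Submodule.exists_isCompl (LinearMap.range T)
  set π := (LinearMap.range T).linearProjOfIsCompl q hq with hπ
  set e := LinearMap.quotKerEquivRange T with he
  set τq := (LinearMap.ker T).liftQ τ hker' with hτq
  set L : (κ → ℂ) →ₗ[ℂ] ℂ := τq ∘ₗ (e.symm.toLinearMap) ∘ₗ π with hL
  have hLΦ : ∀ z : Z, L (Φ z) = f z := by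
    intro z
    have h1 : T (Finsupp.single z 1) = Φ z := by
      rw [hT, Finsupp.linearCombination_single, one_smul]
    have hmem : Φ z ∈ LinearMap.range T := ⟨Finsupp.single z 1, h1⟩
    have h2 : π (Φ z) = ⟨Φ z, hmem⟩ :=
      Submodule.linearProjOfIsCompl_apply_left hq ⟨Φ z, hmem⟩
    have h3 : e.symm ⟨Φ z, hmem⟩ = Submodule.Quotient.mk (Finsupp.single z 1) := by
      apply e.injective
      rw [LinearEquiv.apply_symm_apply]
      apply Subtype.ext
      rw [he, LinearMap.quotKerEquivRange_apply_mk, h1]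
    have h4 : τ (Finsupp.single z 1) = f z := by
      rw [hτ, Finsupp.linearCombination_single, smul_eq_mul, one_mul]
    simp only [hL, LinearMap.comp_apply, LinearEquiv.coe_toLinearMap, h2, h3]
    rw [hτq, Submodule.liftQ_apply, h4]
  have hrep : f = ∑ k : κ, (L (fun j => if k = j then 1 else 0)) • P k := by
    funext z
    rw [← hLΦ z]
    conv_lhs => rw [pi_eq_sum_univ (Φ z)]
    rw [map_sum, Finset.sum_apply]
    refine Finset.sum_congr rfl fun k _ => ?_
    rw [map_smul, smul_eq_mul, Pi.smul_apply, smul_eq_mul]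
    simp [Φ, mul_comm]
  rw [hrep]
  exact Submodule.sum_mem _ fun k _ => Submodule.smul_mem _ _ (Submodule.subset_span ⟨k, rfl⟩)

/-- The polarization identity. -/
lemma polarize {d : ℕ} {U : Set (Fin d → ℂ)}
    {κ : Type*} [Fintype κ]
    {P : κ → (Fin d → ℂ) → ℂ} {C : κ → ℝ}
    {f : ℕ → (Fin d → ℂ) → ℂ}
    (hP : ∀ k, AnalyticOnNhd ℂ (P k) U)
    (hf : ∀ j, AnalyticOnNhd ℂ (f j) U)
    (hsum : ∀ z ∈ U, Summable fun j => ‖f j z‖ ^ 2)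
    (hdiag : ∀ z ∈ U, ∑ k, C k * ‖P k z‖ ^ 2 = 1 + ∑' j, ‖f j z‖ ^ 2)
    {c : Fin d → ℂ} {ρ : ℝ} (hρ : 0 < ρ) (hball : Metric.ball c (4 * ρ) ⊆ U)
    {z w : Fin d → ℂ} (hz : z ∈ Metric.ball c ρ) (hw : w ∈ Metric.ball c ρ) :
    ∑ k, (C k : ℂ) * (P k z * (starRingEnd ℂ) (P k w))
      = 1 + ∑' j, f j z * (starRingEnd ℂ) (f j w) := by
  classical
  have hKU : Metric.closedBall c (3 * ρ) ⊆ U :=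
    (Metric.closedBall_subset_ball (by linarith)).trans hball
  have hKcomp : IsCompact (Metric.closedBall c (3 * ρ)) := isCompact_closedBall _ _
  -- tails
  set T : ℕ → (Fin d → ℂ) → ℝ := fun J x => ∑' j, ‖f (j + J) x‖ ^ 2 with hTdef
  have hTsummable : ∀ J, ∀ x ∈ U, Summable fun j => ‖f (j + J) x‖ ^ 2 :=
    fun J x hx => (summable_nat_add_iff J).2 (hsum x hx)
  have hTeq : ∀ J, ∀ x ∈ U,
      T J x = (∑ k, C k * ‖P k x‖ ^ 2) - 1 - ∑ j ∈ Finset.range J, ‖f j x‖ ^ 2 := by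
    intro J x hx
    have h1 := Summable.sum_add_tsum_nat_add J (hsum x hx)
    have h2 := hdiag x hx
    simp only [hTdef]
    linarith
  have hTc : ∀ J, ContinuousOn (T J) (Metric.closedBall c (3 * ρ)) := by
    intro J
    have hcont : ContinuousOn
        (fun x => (∑ k, C k * ‖P k x‖ ^ 2) - 1 - ∑ j ∈ Finset.range J, ‖f j x‖ ^ 2) U := by
      apply ContinuousOn.sub
      apply ContinuousOn.sub
      · apply continuousOn_finset_sum
        intro k _
        exact continuousOn_const.mul (((hP k).continuousOn.norm).pow 2)
      · exact continuousOn_const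
      · apply continuousOn_finset_sum
        intro j _
        exact (((hf j).continuousOn.norm).pow 2)
    exact (hcont.mono hKU).congr fun x hx => hTeq J x (hKU hx)
  have hTm : ∀ J, ∀ x ∈ Metric.closedBall c (3 * ρ), T (J + 1) x ≤ T J x := by
    intro J x hx
    have hxU : x ∈ U := hKU hx
    have h1 := Summable.tsum_eq_zero_add (hTsummable J x hxU)
    have h2 : ∑' j, ‖f (j + 1 + J) x‖ ^ 2 = T (J + 1) x := by
      apply tsum_congr
      intro j
      have hje : j + 1 + J = j + (J + 1) := by omega
      rw [hje]
    simp only [hTdef] at h1 ⊢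
    rw [h2] at h1
    have h3 : (0:ℝ) ≤ ‖f (0 + J) x‖ ^ 2 := sq_nonneg _
    linarith
  have hT0 : ∀ x ∈ Metric.closedBall c (3 * ρ), Tendsto (fun J => T J x) atTop (𝓝 0) := by
    intro x hx
    have hxU : x ∈ U := hKU hx
    have h1 : Tendsto (fun J => ∑ j ∈ Finset.range J, ‖f j x‖ ^ 2) atTop
        (𝓝 (∑' j, ‖f j x‖ ^ 2)) := (hsum x hxU).hasSum.tendsto_sum_nat
    have h2 : (fun J => T J x)
        = fun J => (∑' j, ‖f j x‖ ^ 2) - ∑ j ∈ Finset.range J, ‖f j x‖ ^ 2 := by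
      funext J
      have := Summable.sum_add_tsum_nat_add J (hsum x hxU)
      simp only [hTdef]
      linarith
    rw [h2]
    have h3 := (tendsto_const_nhds (x := ∑' j, ‖f j x‖ ^ 2) (f := atTop (α := ℕ))).sub h1
    simpa using h3
  -- geometry
  set m : Fin d → ℂ := (2⁻¹ : ℂ) • (z + w) with hm
  set uu : Fin d → ℂ := (-Complex.I) • ((2⁻¹ : ℂ) • (z - w)) with huu
  set γ : ℂ → Fin d → ℂ := fun t => m + t • uu with hγ
  set γs : ℂ → Fin d → ℂ := fun t => m + (starRingEnd ℂ) t • uu with hγs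
  have hhalf : ‖(2⁻¹ : ℂ)‖ = 2⁻¹ := by
    rw [norm_inv]
    simp
  have hmc : ‖m - c‖ < ρ := by
    have h1 : m - c = (2⁻¹ : ℂ) • ((z - c) + (w - c)) := by
      rw [hm]; module
    rw [h1, norm_smul, hhalf]
    have h2 : ‖(z - c) + (w - c)‖ ≤ ‖z - c‖ + ‖w - c‖ := norm_add_le _ _
    have hz' : ‖z - c‖ < ρ := by rw [← dist_eq_norm]; exact mem_ball.1 hz
    have hw' : ‖w - c‖ < ρ := by rw [← dist_eq_norm]; exact mem_ball.1 hw
    nlinarith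
  have huρ : ‖uu‖ < ρ := by
    rw [huu, norm_smul, norm_smul, norm_neg, Complex.norm_I, one_mul, hhalf]
    have h1 : z - w = (z - c) - (w - c) := by module
    have hz' : ‖z - c‖ < ρ := by rw [← dist_eq_norm]; exact mem_ball.1 hz
    have hw' : ‖w - c‖ < ρ := by rw [← dist_eq_norm]; exact mem_ball.1 hw
    have h2 : ‖z - w‖ ≤ ‖z - c‖ + ‖w - c‖ := by
      rw [h1]; exact norm_sub_le _ _
    nlinarith
  have hγK : ∀ t : ℂ, ‖t‖ ≤ 2 → γ t ∈ Metric.closedBall c (3 * ρ) := by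
    intro t ht
    rw [mem_closedBall, dist_eq_norm]
    have h1 : γ t - c = (m - c) + t • uu := by rw [hγ]; module
    rw [h1]
    have h2 : ‖(m - c) + t • uu‖ ≤ ‖m - c‖ + ‖t‖ * ‖uu‖ := by
      refine (norm_add_le _ _).trans ?_
      rw [norm_smul]
    nlinarith [norm_nonneg uu, norm_nonneg t]
  have hγsK : ∀ t : ℂ, ‖t‖ ≤ 2 → γs t ∈ Metric.closedBall c (3 * ρ) := by
    intro t ht
    have : γs t = γ ((starRingEnd ℂ) t) := rfl
    rw [this]
    exact hγK _ (by rwa [RCLike.norm_conj])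
  have hγU : ∀ t ∈ Metric.ball (0:ℂ) 2, γ t ∈ U :=
    fun t ht => hKU (hγK t (mem_ball_zero_iff.1 ht).le)
  have hγsU : ∀ t ∈ Metric.ball (0:ℂ) 2, γs t ∈ U :=
    fun t ht => hKU (hγsK t (mem_ball_zero_iff.1 ht).le)
  -- series
  set term : ℕ → ℂ → ℂ := fun j t => f j (γ t) * (starRingEnd ℂ) (f j (γs t)) with hterm
  have htermsum : ∀ t ∈ Metric.ball (0:ℂ) 2, Summable fun j => term j t :=
    fun t ht => summable_mul_conj (hsum _ (hγU t ht)) (hsum _ (hγsU t ht))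
  set SF : ℕ → ℂ → ℂ := fun J t => ∑ j ∈ Finset.range J, term j t with hSF
  set g : ℂ → ℂ := fun t => ∑' j, term j t with hg
  set G : ℂ → ℂ :=
    fun t => ∑ k, (C k : ℂ) * (P k (γ t) * (starRingEnd ℂ) (P k (γs t))) with hG
  -- differentiability
  have hγdiff : ∀ t : ℂ, DifferentiableAt ℂ γ t := by
    intro t
    exact (differentiableAt_fun_id.smul_const uu).const_add m
  have hcomp1 : ∀ (F : (Fin d → ℂ) → ℂ), AnalyticOnNhd ℂ F U → ∀ t ∈ Metric.ball (0:ℂ) 2,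
      DifferentiableAt ℂ (fun s => F (γ s)) t := fun F hF t ht =>
    ((hF _ (hγU t ht)).differentiableAt).comp t (hγdiff t)
  have hcomp2 : ∀ (F : (Fin d → ℂ) → ℂ), AnalyticOnNhd ℂ F U → ∀ t ∈ Metric.ball (0:ℂ) 2,
      DifferentiableAt ℂ (fun s => (starRingEnd ℂ) (F (γs s))) t := by
    intro F hF t ht
    have hmem : γ ((starRingEnd ℂ) t) ∈ U := by
      apply hKU
      apply hγK
      rw [RCLike.norm_conj]
      exact (mem_ball_zero_iff.1 ht).le
    have hG1 : DifferentiableAt ℂ (fun s => F (γ s)) ((starRingEnd ℂ) t) :=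
      ((hF _ hmem).differentiableAt).comp _ (hγdiff _)
    exact differentiableAt_conj_comp (G := fun s => F (γ s)) hG1
  have hSFdiff : ∀ J : ℕ, DifferentiableOn ℂ (SF J) (Metric.ball (0:ℂ) 2) := by
    intro J t ht
    apply DifferentiableAt.differentiableWithinAt
    apply DifferentiableAt.fun_sum
    intro j _
    exact (hcomp1 (f j) (hf j) t ht).mul (hcomp2 (f j) (hf j) t ht)
  -- uniform convergence
  have hbound : ∀ (j : ℕ) (t : ℂ), ‖term j t‖
      ≤ (‖f j (γ t)‖ ^ 2 + ‖f j (γs t)‖ ^ 2) / 2 := by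
    intro j t
    rw [hterm]
    simp only []
    rw [norm_mul, RCLike.norm_conj]
    nlinarith [sq_nonneg (‖f j (γ t)‖ - ‖f j (γs t)‖), norm_nonneg (f j (γ t)),
      norm_nonneg (f j (γs t))]
  have hunif : TendstoUniformlyOn SF g atTop (Metric.ball (0:ℂ) 2) := by
    rw [Metric.tendstoUniformlyOn_iff]
    intro ε hε
    obtain ⟨J₀, hJ₀⟩ := dini_aux hKcomp T hTc hTm hT0 (half_pos hε)
    filter_upwards [eventually_ge_atTop J₀] with J hJ
    intro t ht
    have hγUt : γ t ∈ U := hγU t ht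
    have hγsUt : γs t ∈ U := hγsU t ht
    have hsm := htermsum t ht
    have htail : g t - SF J t = ∑' j, term (j + J) t := by
      have h1 := Summable.sum_add_tsum_nat_add J hsm
      simp only [hg, hSF]
      linear_combination -h1
    have hs1 : Summable fun j => ‖f (j + J) (γ t)‖ ^ 2 := hTsummable J _ hγUt
    have hs2 : Summable fun j => ‖f (j + J) (γs t)‖ ^ 2 := hTsummable J _ hγsUt
    have hsnorm : Summable fun j => ‖term (j + J) t‖ := by
      have := summable_norm_mul_conj (f := fun j => f (j + J) (γ t))
        (g := fun j => f (j + J) (γs t)) hs1 hs2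
      exact this
    rw [dist_eq_norm, htail]
    have hb1 : ‖∑' j, term (j + J) t‖ ≤ ∑' j, ‖term (j + J) t‖ :=
      norm_tsum_le_tsum_norm hsnorm
    have hb2 : ∑' j, ‖term (j + J) t‖
        ≤ ∑' j, (‖f (j + J) (γ t)‖ ^ 2 + ‖f (j + J) (γs t)‖ ^ 2) / 2 := by
      apply Summable.tsum_le_tsum _ hsnorm ((hs1.add hs2).div_const 2)
      intro j
      exact hbound (j + J) t
    have hb3 : ∑' j, (‖f (j + J) (γ t)‖ ^ 2 + ‖f (j + J) (γs t)‖ ^ 2) / 2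
        = (T J (γ t) + T J (γs t)) / 2 := by
      rw [tsum_div_const, Summable.tsum_add hs1 hs2]
    have hT1 : T J (γ t) < ε / 2 := hJ₀ J hJ _ (hγK t (mem_ball_zero_iff.1 ht).le)
    have hT2 : T J (γs t) < ε / 2 := hJ₀ J hJ _ (hγsK t (mem_ball_zero_iff.1 ht).le)
    calc ‖∑' j, term (j + J) t‖ ≤ (T J (γ t) + T J (γs t)) / 2 := by
          rw [← hb3]; exact hb1.trans hb2
      _ < ε := by linarith
  have hgdiff : DifferentiableOn ℂ g (Metric.ball (0:ℂ) 2) :=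
    (hunif.tendstoLocallyUniformlyOn).differentiableOn
      (Eventually.of_forall hSFdiff) isOpen_ball
  have hGdiff : DifferentiableOn ℂ G (Metric.ball (0:ℂ) 2) := by
    intro t ht
    apply DifferentiableAt.differentiableWithinAt
    apply DifferentiableAt.fun_sum
    intro k _
    exact (differentiableAt_const _).mul
      ((hcomp1 (P k) (hP k) t ht).mul (hcomp2 (P k) (hP k) t ht))
  have hΔ : AnalyticOnNhd ℂ (fun t => G t - (1 + g t)) (Metric.ball (0:ℂ) 2) :=
    (hGdiff.sub ((differentiableOn_const 1).add hgdiff)).analyticOnNhd isOpen_ball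
  -- vanishing on the reals
  have hreal : ∀ x : ℝ, (x:ℂ) ∈ Metric.ball (0:ℂ) 2 → G (x:ℂ) - (1 + g (x:ℂ)) = 0 := by
    intro x hx
    have hyy : γs (x:ℂ) = γ (x:ℂ) := by
      simp only [hγs, hγ, Complex.conj_ofReal]
    have hyU : γ (x:ℂ) ∈ U := hγU _ hx
    have hgx : g (x:ℂ) = ((∑' j, ‖f j (γ (x:ℂ))‖ ^ 2 : ℝ) : ℂ) := by
      rw [Complex.ofReal_tsum]
      apply tsum_congr
      intro j
      simp only [hg, hterm]
      rw [hyy, mul_conj_eq]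
    have hGx : G (x:ℂ) = ((∑ k, C k * ‖P k (γ (x:ℂ))‖ ^ 2 : ℝ) : ℂ) := by
      rw [Complex.ofReal_sum]
      apply Finset.sum_congr rfl
      intro k _
      rw [hyy, mul_conj_eq]
      push_cast
      ring
    rw [hgx, hGx, hdiag _ hyU]
    push_cast
    ring
  -- identity theorem
  have hfreq : ∃ᶠ t in 𝓝[≠] (0:ℂ), (fun t => G t - (1 + g t)) t = 0 := by
    have hseq : Tendsto (fun k : ℕ => (((1:ℝ) / (k + 1) : ℝ) : ℂ)) atTop (𝓝[≠] (0:ℂ)) := by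
      rw [tendsto_nhdsWithin_iff]
      constructor
      · have h0 : Tendsto (fun k : ℕ => (1:ℝ) / (k + 1)) atTop (𝓝 0) :=
          tendsto_one_div_add_atTop_nhds_zero_nat
        have := (Complex.continuous_ofReal.tendsto 0).comp h0
        simpa [Function.comp_def, one_div] using this
      · apply Eventually.of_forall
        intro k
        simp only [Set.mem_compl_iff, Set.mem_singleton_iff, Complex.ofReal_eq_zero]
        positivity
    apply hseq.frequently
    apply Frequently.of_forall
    intro k
    apply hreal
    rw [mem_ball_zero_iff, Complex.norm_real, Real.norm_eq_abs]
    have h1 : (0:ℝ) < 1 / (k + 1) := by positivity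
    have h2 : (1:ℝ) / (k + 1) ≤ 1 := by
      rw [div_le_one (by positivity)]
      linarith [Nat.cast_nonneg (α := ℝ) k]
    rw [abs_of_pos h1]
    linarith
  have hEq : EqOn (fun t => G t - (1 + g t)) 0 (Metric.ball (0:ℂ) 2) :=
    hΔ.eqOn_zero_of_preconnected_of_frequently_eq_zero
      ((convex_ball (0:ℂ) 2).isPreconnected) (mem_ball_self (by norm_num)) hfreq
  -- evaluate at I
  have hI2 : Complex.I ∈ Metric.ball (0:ℂ) 2 := by
    rw [mem_ball_zero_iff, Complex.norm_I]; norm_num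
  have hγI : γ Complex.I = z := by
    rw [hγ]
    simp only [huu, hm]
    rw [smul_smul]
    have : Complex.I * -Complex.I = 1 := by
      rw [mul_neg, Complex.I_mul_I, neg_neg]
    rw [this, one_smul]
    module
  have hγsI : γs Complex.I = w := by
    rw [hγs]
    simp only [huu, hm, Complex.conj_I]
    rw [smul_smul]
    have : -Complex.I * -Complex.I = -1 := by
      rw [neg_mul_neg, Complex.I_mul_I]
    rw [this]
    module
  have hfin := hEq hI2
  simp only [Pi.zero_apply] at hfin
  have hfin2 : G Complex.I = 1 + g Complex.I := by
    have := sub_eq_zero.mp hfin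
    linear_combination this
  rw [← hγI, ← hγsI]
  simp only [hG, hg, hterm] at hfin2 ⊢
  exact hfin2


end Stmt0Aux

open Stmt0Aux

/-- If `(1 + Σ_{i=1}^n |h_i|²)^α = 1 + ∑'_j |f_j|²` on a nonempty connected
open set `U ⊆ ℂ^d` with all functions holomorphic, then the span of the `f_j` (as functions
on `U`) has dimension at most `(n+α).choose n`; in particular the `f_j` are not
linearly independent. -/
theorem stmt_0 (d n : ℕ) (hd : 1 ≤ d) (hn : 1 ≤ n)
    (U : Set (Fin d → ℂ)) (hUo : IsOpen U) (hUc : IsConnected U)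
    (α : ℕ) (hα : 0 < α)
    (h : Fin n → (Fin d → ℂ) → ℂ) (hh : ∀ i, AnalyticOn ℂ (h i) U)
    (f : ℕ → (Fin d → ℂ) → ℂ) (hf : ∀ j, AnalyticOn ℂ (f j) U)
    (hsum : ∀ z ∈ U, Summable fun j => ‖f j z‖ ^ 2)
    (heq : ∀ z ∈ U, (1 + ∑ i, ‖h i z‖ ^ 2) ^ α = 1 + ∑' j, ‖f j z‖ ^ 2) :
    Module.rank ℂ ↥(Submodule.span ℂ (Set.range fun j => U.restrict (f j)))
        ≤ ((n + α).choose n : Cardinal) ∧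
      ¬ LinearIndependent ℂ (fun j => U.restrict (f j)) := by
  classical
  obtain ⟨c, hcU⟩ := hUc.nonempty
  obtain ⟨ε, hε, hballU⟩ := Metric.isOpen_iff.1 hUo c hcU
  set ρ := ε / 5 with hρdef
  have hρ : 0 < ρ := by positivity
  have hball : Metric.ball c (4 * ρ) ⊆ U := by
    refine Subset.trans (Metric.ball_subset_ball ?_) hballU
    rw [hρdef]; linarith
  have hballρU : Metric.ball c ρ ⊆ U := by
    refine Subset.trans (Metric.ball_subset_ball ?_) hball
    linarith
  have hfN : ∀ j, AnalyticOnNhd ℂ (f j) U := fun j => (hUo.analyticOn_iff_analyticOnNhd).1 (hf j)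
  have hhN : ∀ i, AnalyticOnNhd ℂ (h i) U := fun i => (hUo.analyticOn_iff_analyticOnNhd).1 (hh i)
  -- the monomial data
  set hh1 : Fin (n + 1) → (Fin d → ℂ) → ℂ := Fin.snoc h (fun _ => (1 : ℂ)) with hhh1
  have hh1N : ∀ i, AnalyticOnNhd ℂ (hh1 i) U := by
    intro i
    refine Fin.lastCases ?_ ?_ i
    · have : hh1 (Fin.last n) = fun _ => (1 : ℂ) := by
        rw [hhh1]; exact Fin.snoc_last _ _
      rw [this]; exact analyticOnNhd_const
    · intro i
      have : hh1 i.castSucc = h i := by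
        rw [hhh1]; exact Fin.snoc_castSucc _ _ _
      rw [this]; exact hhN i
  set S : Finset (Fin (n + 1) → ℕ) := Finset.piAntidiag Finset.univ α with hS
  set p : (Fin (n + 1) → ℕ) → (Fin d → ℂ) → ℂ := fun k y => ∏ i, hh1 i y ^ k i with hp
  have hpN : ∀ k, AnalyticOnNhd ℂ (p k) U := fun k =>
    analyticOnNhd_finset_prod Finset.univ _ (fun i => (hh1N i).pow _)
  set C : {x // x ∈ S} → ℝ :=
    fun k => (Nat.multinomial Finset.univ (k : Fin (n + 1) → ℕ) : ℝ) with hC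
  set PP : {x // x ∈ S} → (Fin d → ℂ) → ℂ := fun k => p (k : Fin (n + 1) → ℕ) with hPP
  have hPPN : ∀ k, AnalyticOnNhd ℂ (PP k) U := fun k => hpN _
  -- the diagonal identity
  have hnorm1 : ∀ y, (1 + ∑ i, ‖h i y‖ ^ 2) = ∑ i : Fin (n + 1), ‖hh1 i y‖ ^ 2 := by
    intro y
    rw [Fin.sum_univ_castSucc]
    have h1 : ∀ i : Fin n, hh1 i.castSucc y = h i y := by
      intro i; rw [hhh1]; rw [Fin.snoc_castSucc]
    have h2 : hh1 (Fin.last n) y = 1 := by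
      rw [hhh1]; rw [Fin.snoc_last]
    simp only [h1, h2]
    rw [norm_one]
    ring
  have hpnorm : ∀ (k : Fin (n + 1) → ℕ) y, ‖p k y‖ ^ 2 = ∏ i, (‖hh1 i y‖ ^ 2) ^ k i := by
    intro k y
    rw [hp]
    simp only []
    rw [norm_prod]
    rw [← Finset.prod_pow]
    apply Finset.prod_congr rfl
    intro i _
    rw [norm_pow]
    ring
  have hdiag : ∀ y ∈ U, ∑ k, C k * ‖PP k y‖ ^ 2 = 1 + ∑' j, ‖f j y‖ ^ 2 := by
    intro y hy
    rw [← heq y hy]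
    have e1 : ∑ k, C k * ‖PP k y‖ ^ 2
        = ∑ k ∈ S, (Nat.multinomial Finset.univ k : ℝ) * ‖p k y‖ ^ 2 := by
      rw [← Finset.sum_coe_sort S]
    rw [e1]
    have e2 : ∑ k ∈ S, (Nat.multinomial Finset.univ k : ℝ) * ‖p k y‖ ^ 2
        = ∑ k ∈ S, (Nat.multinomial Finset.univ k : ℝ) * ∏ i, (‖hh1 i y‖ ^ 2) ^ k i := by
      apply Finset.sum_congr rfl
      intro k _
      rw [hpnorm]
    rw [e2, hnorm1 y, hS]
    exact (Finset.sum_pow_eq_sum_piAntidiag Finset.univ (fun i => ‖hh1 i y‖ ^ 2) α).symm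
  -- polarization
  have hKEY : ∀ a ∈ Metric.ball c ρ, ∀ b ∈ Metric.ball c ρ,
      ∑ k, (C k : ℂ) * (PP k a * (starRingEnd ℂ) (PP k b))
        = 1 + ∑' j, f j a * (starRingEnd ℂ) (f j b) :=
    fun a ha b hb => polarize hPPN hfN hsum hdiag hρ hball ha hb
  -- span membership on the ball
  have hmemball : ∀ j, (fun z : ↥(Metric.ball c ρ) => f j (z : Fin d → ℂ)) ∈
      Submodule.span ℂ
        (Set.range fun k : {x // x ∈ S} =>
          fun z : ↥(Metric.ball c ρ) => PP k (z : Fin d → ℂ)) := by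
    intro j
    apply mem_span_of_relations
    intro μ hμ
    set s := μ.support with hs
    have hZU : ∀ z : ↥(Metric.ball c ρ), (z : Fin d → ℂ) ∈ U := fun z => hballρU z.2
    -- expansion helper
    have hprodexp : ∀ v : ↥(Metric.ball c ρ) → ℂ,
        (∑ a ∈ s, μ a * v a) * (starRingEnd ℂ) (∑ b ∈ s, μ b * v b)
          = ∑ q ∈ s ×ˢ s, (μ q.1 * (starRingEnd ℂ) (μ q.2)) *
              (v q.1 * (starRingEnd ℂ) (v q.2)) := by
      intro v
      rw [map_sum, Finset.sum_mul_sum, ← Finset.sum_product']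
      apply Finset.sum_congr rfl
      intro q _
      rw [map_mul]
      ring
    -- summability helpers
    have hsumq : ∀ q : ↥(Metric.ball c ρ) × ↥(Metric.ball c ρ),
        Summable fun jj => f jj (q.1 : Fin d → ℂ) * (starRingEnd ℂ) (f jj (q.2 : Fin d → ℂ)) :=
      fun q => summable_mul_conj (hsum _ (hZU q.1)) (hsum _ (hZU q.2))
    have hBsum : Summable fun jj => ‖∑ a ∈ s, μ a * f jj (a : Fin d → ℂ)‖ ^ 2 := by
      have hbd : ∀ jj, ‖∑ a ∈ s, μ a * f jj (a : Fin d → ℂ)‖ ^ 2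
          ≤ ∑ q ∈ s ×ˢ s, (‖μ q.1‖ * ‖μ q.2‖) *
              (‖f jj (q.1 : Fin d → ℂ)‖ * ‖f jj (q.2 : Fin d → ℂ)‖) := by
        intro jj
        have h1 : ‖∑ a ∈ s, μ a * f jj (a : Fin d → ℂ)‖
            ≤ ∑ a ∈ s, ‖μ a‖ * ‖f jj (a : Fin d → ℂ)‖ := by
          refine (norm_sum_le _ _).trans ?_
          apply Finset.sum_le_sum
          intro a _
          rw [norm_mul]
        have h2 : ‖∑ a ∈ s, μ a * f jj (a : Fin d → ℂ)‖ ^ 2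
            ≤ (∑ a ∈ s, ‖μ a‖ * ‖f jj (a : Fin d → ℂ)‖) ^ 2 := by
          apply pow_le_pow_left₀ (norm_nonneg _) h1
        refine h2.trans_eq ?_
        rw [sq, Finset.sum_mul_sum, ← Finset.sum_product']
        apply Finset.sum_congr rfl
        intro q _
        ring
      apply Summable.of_nonneg_of_le (fun _ => sq_nonneg _) hbd
      apply summable_sum
      intro q _
      apply Summable.mul_left
      have hb2 : ∀ jj, ‖f jj (q.1 : Fin d → ℂ)‖ * ‖f jj (q.2 : Fin d → ℂ)‖
          ≤ (‖f jj (q.1 : Fin d → ℂ)‖ ^ 2 + ‖f jj (q.2 : Fin d → ℂ)‖ ^ 2) / 2 := by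
        intro jj
        nlinarith [sq_nonneg (‖f jj (q.1 : Fin d → ℂ)‖ - ‖f jj (q.2 : Fin d → ℂ)‖),
          norm_nonneg (f jj (q.1 : Fin d → ℂ)), norm_nonneg (f jj (q.2 : Fin d → ℂ))]
      exact Summable.of_nonneg_of_le (fun jj => by positivity) hb2
        (((hsum _ (hZU q.1)).add (hsum _ (hZU q.2))).div_const 2)
    -- the main identity
    have hmain : ∑ k, (C k : ℂ) *
          ((∑ a ∈ s, μ a * PP k (a : Fin d → ℂ)) *
            (starRingEnd ℂ) (∑ b ∈ s, μ b * PP k (b : Fin d → ℂ)))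
        = (∑ a ∈ s, μ a) * (starRingEnd ℂ) (∑ b ∈ s, μ b)
          + ∑' jj, (∑ a ∈ s, μ a * f jj (a : Fin d → ℂ)) *
              (starRingEnd ℂ) (∑ b ∈ s, μ b * f jj (b : Fin d → ℂ)) := by
      calc ∑ k, (C k : ℂ) *
            ((∑ a ∈ s, μ a * PP k (a : Fin d → ℂ)) *
              (starRingEnd ℂ) (∑ b ∈ s, μ b * PP k (b : Fin d → ℂ)))
          = ∑ k, ∑ q ∈ s ×ˢ s, (μ q.1 * (starRingEnd ℂ) (μ q.2)) *
              ((C k : ℂ) * (PP k (q.1 : Fin d → ℂ) * (starRingEnd ℂ) (PP k (q.2 : Fin d → ℂ)))) := by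
            apply Finset.sum_congr rfl
            intro k _
            rw [hprodexp (fun z => PP k (z : Fin d → ℂ)), Finset.mul_sum]
            apply Finset.sum_congr rfl
            intro q _
            ring
        _ = ∑ q ∈ s ×ˢ s, (μ q.1 * (starRingEnd ℂ) (μ q.2)) *
              (∑ k, (C k : ℂ) * (PP k (q.1 : Fin d → ℂ) * (starRingEnd ℂ) (PP k (q.2 : Fin d → ℂ)))) := by
            rw [Finset.sum_comm]
            apply Finset.sum_congr rfl
            intro q _
            rw [Finset.mul_sum]
        _ = ∑ q ∈ s ×ˢ s, (μ q.1 * (starRingEnd ℂ) (μ q.2)) *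
              (1 + ∑' jj, f jj (q.1 : Fin d → ℂ) * (starRingEnd ℂ) (f jj (q.2 : Fin d → ℂ))) := by
            apply Finset.sum_congr rfl
            intro q _
            rw [hKEY _ q.1.2 _ q.2.2]
        _ = (∑ q ∈ s ×ˢ s, μ q.1 * (starRingEnd ℂ) (μ q.2))
            + ∑ q ∈ s ×ˢ s, ∑' jj, (μ q.1 * (starRingEnd ℂ) (μ q.2)) *
                (f jj (q.1 : Fin d → ℂ) * (starRingEnd ℂ) (f jj (q.2 : Fin d → ℂ))) := by
            rw [← Finset.sum_add_distrib]
            apply Finset.sum_congr rfl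
            intro q _
            rw [mul_add, mul_one, tsum_mul_left]
        _ = (∑ a ∈ s, μ a) * (starRingEnd ℂ) (∑ b ∈ s, μ b)
            + ∑' jj, (∑ a ∈ s, μ a * f jj (a : Fin d → ℂ)) *
                (starRingEnd ℂ) (∑ b ∈ s, μ b * f jj (b : Fin d → ℂ)) := by
            congr 1
            · have := hprodexp (fun _ => (1 : ℂ))
              simpa using this.symm
            · rw [← Summable.tsum_finsetSum (fun q _ => (hsumq q).mul_left _)]
              apply tsum_congr
              intro jj
              rw [hprodexp (fun z => f jj (z : Fin d → ℂ))]
    -- the relations kill the left side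
    have hzero : ∑ k, (C k : ℂ) *
          ((∑ a ∈ s, μ a * PP k (a : Fin d → ℂ)) *
            (starRingEnd ℂ) (∑ b ∈ s, μ b * PP k (b : Fin d → ℂ))) = 0 := by
      apply Finset.sum_eq_zero
      intro k _
      have hk := hμ k
      have : (∑ a ∈ s, μ a * PP k (a : Fin d → ℂ)) = 0 := hk
      rw [this]
      simp
    rw [hzero] at hmain
    -- realify
    have hofreal : (0 : ℂ) =
        ((‖∑ a ∈ s, μ a‖ ^ 2 + ∑' jj, ‖∑ a ∈ s, μ a * f jj (a : Fin d → ℂ)‖ ^ 2 : ℝ) : ℂ) := by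
      rw [hmain]
      rw [Complex.ofReal_add, mul_conj_eq, Complex.ofReal_tsum]
      congr 1
      apply tsum_congr
      intro jj
      rw [mul_conj_eq]
    have hrealeq : (0 : ℝ)
        = ‖∑ a ∈ s, μ a‖ ^ 2 + ∑' jj, ‖∑ a ∈ s, μ a * f jj (a : Fin d → ℂ)‖ ^ 2 := by
      have := hofreal
      exact_mod_cast this
    have htsum0 : ∑' jj, ‖∑ a ∈ s, μ a * f jj (a : Fin d → ℂ)‖ ^ 2 = 0 := by
      have h1 : (0:ℝ) ≤ ∑' jj, ‖∑ a ∈ s, μ a * f jj (a : Fin d → ℂ)‖ ^ 2 :=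
        tsum_nonneg fun jj => sq_nonneg _
      nlinarith [sq_nonneg (‖∑ a ∈ s, μ a‖)]
    have hterm0 : ‖∑ a ∈ s, μ a * f j (a : Fin d → ℂ)‖ ^ 2 = 0 := by
      have h2 := Summable.le_tsum hBsum j (fun jj _ => sq_nonneg _)
      have h3 : (0:ℝ) ≤ ‖∑ a ∈ s, μ a * f j (a : Fin d → ℂ)‖ ^ 2 := sq_nonneg _
      rw [htsum0] at h2
      linarith
    have : ∑ a ∈ s, μ a * f j (a : Fin d → ℂ) = 0 := by
      rw [← norm_eq_zero]
      exact pow_eq_zero_iff (n := 2) (by norm_num) |>.1 hterm0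
    exact this
  -- extend the span membership to U
  have hmemU : ∀ j, U.restrict (f j) ∈
      Submodule.span ℂ (Set.range fun k : {x // x ∈ S} => U.restrict (PP k)) := by
    intro j
    obtain ⟨b, hb⟩ := (Submodule.mem_span_range_iff_exists_fun (R := ℂ)).1 (hmemball j)
    have hbz : ∀ y (hy : y ∈ Metric.ball c ρ), ∑ k, b k * PP k y = f j y := by
      intro y hy
      have := congrFun hb ⟨y, hy⟩
      simpa [Finset.sum_apply, Pi.smul_apply, smul_eq_mul] using this
    have hQN : AnalyticOnNhd ℂ (fun y => f j y - ∑ k, b k * PP k y) U := by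
      apply AnalyticOnNhd.sub (hfN j)
      have := analyticOnNhd_finset_sum (U := U) Finset.univ
        (fun (k : {x // x ∈ S}) y => b k * PP k y)
        (fun k => analyticOnNhd_const.mul (hPPN k))
      exact this
    have hzero : EqOn (fun y => f j y - ∑ k, b k * PP k y) 0 U := by
      apply hQN.eqOn_zero_of_preconnected_of_eventuallyEq_zero hUc.isPreconnected hcU
      apply Filter.eventuallyEq_of_mem (Metric.ball_mem_nhds c hρ)
      intro y hy
      have := hbz y hy
      simp only [Pi.zero_apply]
      linear_combination -this
    have hfeq : U.restrict (f j) = ∑ k, b k • U.restrict (PP k) := by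
      funext y
      have h0 := hzero y.2
      simp only [Pi.zero_apply] at h0
      simp only [Set.restrict_apply, Set.restrict, Finset.sum_apply, Pi.smul_apply, smul_eq_mul]
      linear_combination h0
    rw [hfeq]
    exact Submodule.sum_mem _ fun k _ =>
      Submodule.smul_mem _ _ (Submodule.subset_span ⟨k, rfl⟩)
  -- cardinality count
  have hcard : S.card = (n + α).choose n := by
    rw [hS, ← Finset.map_sym_eq_piAntidiag, Finset.card_map, Finset.sym_univ,
      Finset.card_univ, Sym.card_sym_eq_choose, Fintype.card_fin]
    have e1 : n + 1 + α - 1 = n + α := by omega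
    rw [e1, ← Nat.choose_symm (Nat.le_add_right n α)]
    congr 1
    omega
  -- rank bound
  have hrank : Module.rank ℂ ↥(Submodule.span ℂ (Set.range fun j => U.restrict (f j)))
      ≤ ((n + α).choose n : Cardinal) := by
    have hle : Submodule.span ℂ (Set.range fun j => U.restrict (f j))
        ≤ Submodule.span ℂ (Set.range fun k : {x // x ∈ S} => U.restrict (PP k)) := by
      rw [Submodule.span_le]
      rintro _ ⟨j, rfl⟩
      exact hmemU j
    calc Module.rank ℂ ↥(Submodule.span ℂ (Set.range fun j => U.restrict (f j)))
        ≤ Module.rank ℂ ↥(Submodule.span ℂ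
            (Set.range fun k : {x // x ∈ S} => U.restrict (PP k))) :=
          Submodule.rank_mono hle
      _ ≤ #(Set.range fun k : {x // x ∈ S} => U.restrict (PP k)) := rank_span_le (R := ℂ) _
      _ ≤ #{x // x ∈ S} := Cardinal.mk_range_le
      _ = (S.card : Cardinal) := Cardinal.mk_coe_finset
      _ = ((n + α).choose n : Cardinal) := by rw [hcard]
  refine ⟨hrank, ?_⟩
  intro li
  have h1 := rank_span li
  have h2 : #(Set.range fun j => U.restrict (f j)) = (Cardinal.aleph0 : Cardinal) := by
    rw [Cardinal.mk_range_eq _ li.injective]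
    exact Cardinal.mk_nat
  rw [h2] at h1
  rw [h1] at hrank
  exact absurd hrank (not_le.2 (Cardinal.nat_lt_aleph0 _))
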